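/- Let x₁,…,xₙ be positive reals with δᵢ ∈ {0,1}, m = ∑ δᵢ ≥ 2, and suppose at least two non-censored observations are distinct (i.e., there exist i ≠ j with δᵢ = δⱼ = 1 and xᵢ ≠ xⱼ). Then for the prior π(η,β) = η^(−1) β^q, the integral d = ∫₀^∞ ∫₀^∞ η^(mβ−1) β^(m+q) (∏ x_i^{δᵢβ}) exp(−(∑ x_i^β) η^β) dη dβ is finite if and only if q > −m. -/

import Mathlib

open MeasureTheory Set Finset

lemma aux_integrableOn {p s b : ℝ} (hp : 0 < p) (hs : -1 < s) (hb : 0 < b) :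
    IntegrableOn (fun x : ℝ => x ^ s * Real.exp (-b * x ^ p)) (Ioi 0) := by
  have ht : -1 < (s + 1) / p - 1 := by
    have : 0 < (s + 1) / p := div_pos (by linarith) hp
    linarith
  have hin : IntegrableOn (fun y : ℝ => y ^ ((s + 1) / p - 1) * Real.exp (-b * y)) (Ioi 0) := by
    have := integrableOn_rpow_mul_exp_neg_mul_rpow (p := 1) ht one_pos hb
    refine this.congr_fun (fun y hy => ?_) measurableSet_Ioi
    beta_reduce
    rw [Real.rpow_one]
  have h := (integrableOn_Ioi_comp_rpow_iff'
      (fun y : ℝ => y ^ ((s + 1) / p - 1) * Real.exp (-b * y)) (ne_of_gt hp)).mpr hin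
  refine h.congr_fun (fun y hy => ?_) measurableSet_Ioi
  have hy0 : (0:ℝ) < y := hy
  beta_reduce
  rw [smul_eq_mul, ← mul_assoc, ← Real.rpow_mul hy0.le, ← Real.rpow_add hy0]
  have : p - 1 + p * ((s + 1) / p - 1) = s := by field_simp; ring
  rw [this]

lemma aux_lintegral {p s b : ℝ} (hp : 0 < p) (hs : -1 < s) (hb : 0 < b) :
    ∫⁻ x in Ioi (0:ℝ), ENNReal.ofReal (x ^ s * Real.exp (-b * x ^ p)) =
      ENNReal.ofReal (b ^ (-(s + 1) / p) * (1 / p) * Real.Gamma ((s + 1) / p)) := by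
  rw [← integral_rpow_mul_exp_neg_mul_rpow hp hs hb,
    ofReal_integral_eq_lintegral_ofReal (aux_integrableOn hp hs hb) ?_]
  filter_upwards [ae_restrict_mem measurableSet_Ioi] with y hy using
    mul_nonneg (Real.rpow_nonneg (le_of_lt hy) _) (Real.exp_pos _).le

theorem stmt_10 (n : ℕ) (x : Fin n → ℝ) (hx : ∀ i, 0 < x i) (δ : Fin n → ℕ)
    (hδ : ∀ i, δ i = 0 ∨ δ i = 1) (m : ℕ) (hm : m = ∑ i, δ i) (hm2 : 2 ≤ m)
    (hdist : ∃ i j, i ≠ j ∧ δ i = 1 ∧ δ j = 1 ∧ x i ≠ x j) (q : ℝ) :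
    (∫⁻ β in Ioi (0:ℝ), ∫⁻ η in Ioi (0:ℝ),
        ENNReal.ofReal (η ^ ((m : ℝ) * β - 1) * β ^ ((m : ℝ) + q) *
          (∏ i, x i ^ ((δ i : ℝ) * β)) * Real.exp (-(∑ i, x i ^ β) * η ^ β))) ≠ ⊤ ↔
      -(m : ℝ) < q := by
  obtain ⟨i, j, hδi, hδj, hxlt⟩ : ∃ i j : Fin n, δ i = 1 ∧ δ j = 1 ∧ x i < x j := by
    obtain ⟨i, j, hij, hi, hj, hne⟩ := hdist
    rcases lt_or_gt_of_ne hne with h | h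
    exacts [⟨i, j, hi, hj, h⟩, ⟨j, i, hj, hi, h⟩]
  classical
  set U : Finset (Fin n) := Finset.univ.filter (fun k => δ k = 1) with hU
  have hiU : i ∈ U := by simp [hU, hδi]
  have hjU : j ∈ U := by simp [hU, hδj]
  have hcard : U.card = m := by
    have h1 : ∑ k ∈ U, 1 = ∑ k, δ k := by
      rw [hU, Finset.sum_filter]
      exact Finset.sum_congr rfl fun k _ => by rcases hδ k with h | h <;> simp [h]
    rw [Finset.card_eq_sum_ones, h1, hm]
  have hm0 : (0:ℝ) < (m:ℝ) := by positivity
  have hS : ∀ β : ℝ, 0 < ∑ k, x k ^ β := fun β =>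
    Finset.sum_pos (fun k _ => Real.rpow_pos_of_pos (hx k) β) ⟨i, Finset.mem_univ i⟩
  have hP : ∀ β : ℝ, 0 < ∏ k ∈ U, x k ^ β := fun β =>
    Finset.prod_pos fun k _ => Real.rpow_pos_of_pos (hx k) β
  have hprod : ∀ β : ℝ, (∏ k, x k ^ ((δ k : ℝ) * β)) = ∏ k ∈ U, x k ^ β := by
    intro β
    rw [← Finset.prod_filter_mul_prod_filter_not Finset.univ (fun k => δ k = 1)]
    have h2 : (∏ k ∈ Finset.univ.filter (fun k => ¬ δ k = 1), x k ^ ((δ k : ℝ) * β)) = 1 := by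
      refine Finset.prod_eq_one fun k hk => ?_
      have hk0 : δ k = 0 := by
        rcases hδ k with h | h
        · exact h
        · exact absurd h (Finset.mem_filter.mp hk).2
      simp [hk0]
    rw [h2, mul_one]
    exact Finset.prod_congr rfl fun k hk => by
      have : δ k = 1 := (Finset.mem_filter.mp hk).2
      simp [this]
  set g : ℝ → ℝ := fun β => Real.Gamma m *
      (β ^ ((m:ℝ) + q - 1) * ((∏ k ∈ U, x k ^ β) * (∑ k, x k ^ β) ^ (-(m:ℝ)))) with hg
  have hΓ : 0 < Real.Gamma m := Real.Gamma_pos_of_pos hm0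
  -- inner integral computation
  have inner_eq : ∀ β ∈ Ioi (0:ℝ),
      (∫⁻ η in Ioi (0:ℝ), ENNReal.ofReal (η ^ ((m : ℝ) * β - 1) * β ^ ((m : ℝ) + q) *
          (∏ i, x i ^ ((δ i : ℝ) * β)) * Real.exp (-(∑ i, x i ^ β) * η ^ β)))
        = ENNReal.ofReal (g β) := by
    intro β hβ
    have hβ0 : (0:ℝ) < β := hβ
    have hSβ : 0 < ∑ k, x k ^ β := hS β
    have h1 : ∀ η : ℝ, η ^ ((m : ℝ) * β - 1) * β ^ ((m : ℝ) + q) *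
        (∏ i, x i ^ ((δ i : ℝ) * β)) * Real.exp (-(∑ i, x i ^ β) * η ^ β)
        = (β ^ ((m:ℝ) + q) * ∏ k ∈ U, x k ^ β) *
          (η ^ ((m : ℝ) * β - 1) * Real.exp (-(∑ i, x i ^ β) * η ^ β)) := by
      intro η; rw [hprod β]; ring
    simp_rw [h1]
    have hC : 0 ≤ β ^ ((m:ℝ) + q) * ∏ k ∈ U, x k ^ β :=
      mul_nonneg (Real.rpow_nonneg hβ0.le _) (hP β).le
    simp_rw [ENNReal.ofReal_mul hC]
    rw [lintegral_const_mul' _ _ ENNReal.ofReal_ne_top]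
    have hsβ : -1 < (m:ℝ) * β - 1 := by nlinarith
    rw [aux_lintegral hβ0 hsβ hSβ, ← ENNReal.ofReal_mul hC]
    congr 1
    have e1 : -((m:ℝ) * β - 1 + 1) / β = -(m:ℝ) := by field_simp; ring
    have e2 : ((m:ℝ) * β - 1 + 1) / β = (m:ℝ) := by field_simp; ring
    rw [e1, e2]
    simp only [hg]
    have e3 : β ^ ((m:ℝ) + q - 1) = β ^ ((m:ℝ) + q) / β := by
      rw [Real.rpow_sub hβ0, Real.rpow_one]
    rw [e3]
    field_simp
  have outer_eq : (∫⁻ β in Ioi (0:ℝ), ∫⁻ η in Ioi (0:ℝ),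
        ENNReal.ofReal (η ^ ((m : ℝ) * β - 1) * β ^ ((m : ℝ) + q) *
          (∏ i, x i ^ ((δ i : ℝ) * β)) * Real.exp (-(∑ i, x i ^ β) * η ^ β)))
      = ∫⁻ β in Ioi (0:ℝ), ENNReal.ofReal (g β) :=
    setLIntegral_congr_fun measurableSet_Ioi inner_eq
  rw [outer_eq]
  constructor
  · -- finite → -(m) < q
    intro h
    by_contra hq
    push_neg at hq
    have ht : (m:ℝ) + q - 1 ≤ -1 := by linarith
    -- lower bound constants
    set c1 : ℝ := ∏ k ∈ U, min (x k) 1 with hc1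
    set M : ℝ := ∑ k, max (x k) 1 with hM
    have hc1pos : 0 < c1 := Finset.prod_pos fun k _ => lt_min (hx k) one_pos
    have hMpos : 0 < M := Finset.sum_pos (fun k _ => lt_of_lt_of_le one_pos (le_max_right _ _))
      ⟨i, Finset.mem_univ i⟩
    set c2 : ℝ := Real.Gamma m * (c1 * M ^ (-(m:ℝ))) with hc2
    have hc2pos : 0 < c2 := by
      apply mul_pos hΓ (mul_pos hc1pos (Real.rpow_pos_of_pos hMpos _))
    have key : ∀ β ∈ Ioc (0:ℝ) 1, c2 * β ^ ((m:ℝ) + q - 1) ≤ g β := by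
      intro β hβ
      obtain ⟨hβ0, hβ1⟩ := hβ
      have hPc1 : c1 ≤ ∏ k ∈ U, x k ^ β := by
        refine Finset.prod_le_prod (fun k _ => (lt_min (hx k) one_pos).le) (fun k _ => ?_)
        rcases le_total (x k) 1 with h | h
        · rw [min_eq_left h]
          calc x k = x k ^ (1:ℝ) := (Real.rpow_one _).symm
          _ ≤ x k ^ β := Real.rpow_le_rpow_of_exponent_ge (hx k) h hβ1
        · rw [min_eq_right h]
          calc (1:ℝ) = x k ^ (0:ℝ) := (Real.rpow_zero _).symm
          _ ≤ x k ^ β := Real.rpow_le_rpow_of_exponent_le h hβ0.le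
      have hSM : (∑ k, x k ^ β) ≤ M := by
        refine Finset.sum_le_sum fun k _ => ?_
        rcases le_total (x k) 1 with h | h
        · exact le_trans (Real.rpow_le_one (hx k).le h hβ0.le) (le_max_right _ _)
        · refine le_trans ?_ (le_max_left _ _)
          calc x k ^ β ≤ x k ^ (1:ℝ) := Real.rpow_le_rpow_of_exponent_le h hβ1
          _ = x k := Real.rpow_one _
      have hSm : M ^ (-(m:ℝ)) ≤ (∑ k, x k ^ β) ^ (-(m:ℝ)) :=
        Real.rpow_le_rpow_of_nonpos (hS β) hSM (by linarith)
      rw [hg, hc2]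
      rw [mul_assoc, mul_comm (c1 * M ^ (-(m:ℝ))) (β ^ ((m:ℝ) + q - 1))]
      rw [← mul_assoc (Real.Gamma m), mul_assoc]
      refine mul_le_mul_of_nonneg_left ?_ hΓ.le
      refine mul_le_mul_of_nonneg_left ?_ (Real.rpow_nonneg hβ0.le _)
      exact mul_le_mul hPc1 hSm (Real.rpow_pos_of_pos hMpos _).le (hP β).le
    -- the lower-bound integral is infinite
    have htop : (∫⁻ β in Ioc (0:ℝ) 1, ENNReal.ofReal (β ^ ((m:ℝ) + q - 1))) = ⊤ := by
      by_contra htop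
      have hmeas : AEStronglyMeasurable (fun β : ℝ => β ^ ((m:ℝ) + q - 1))
          (volume.restrict (Ioc (0:ℝ) 1)) := by
        refine ContinuousOn.aestronglyMeasurable (fun t ht => ?_) measurableSet_Ioc
        exact (Real.continuousAt_rpow_const _ _ (Or.inl ht.1.ne')).continuousWithinAt
      have hnn : 0 ≤ᵐ[volume.restrict (Ioc (0:ℝ) 1)] fun β : ℝ => β ^ ((m:ℝ) + q - 1) := by
        filter_upwards [ae_restrict_mem measurableSet_Ioc] with β hβ using
          Real.rpow_nonneg hβ.1.le _
      have hint : IntegrableOn (fun β : ℝ => β ^ ((m:ℝ) + q - 1)) (Ioc (0:ℝ) 1) := by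
        refine ⟨hmeas, ?_⟩
        rw [hasFiniteIntegral_iff_ofReal hnn]
        exact lt_top_iff_ne_top.mpr htop
      have : IntegrableOn (fun β : ℝ => β ^ ((m:ℝ) + q - 1)) (Ioo (0:ℝ) 1) :=
        hint.mono Ioo_subset_Ioc_self le_rfl
      rw [intervalIntegral.integrableOn_Ioo_rpow_iff zero_lt_one] at this
      linarith
    apply h
    rw [eq_top_iff]
    calc (⊤ : ENNReal) = ∫⁻ β in Ioc (0:ℝ) 1, ENNReal.ofReal c2 * ENNReal.ofReal (β ^ ((m:ℝ) + q - 1)) := by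
          rw [lintegral_const_mul' _ _ ENNReal.ofReal_ne_top, htop,
            ENNReal.mul_top (by simpa using hc2pos.not_ge)]
      _ ≤ ∫⁻ β in Ioc (0:ℝ) 1, ENNReal.ofReal (g β) := by
          refine lintegral_mono_ae ?_
          filter_upwards [ae_restrict_mem measurableSet_Ioc] with β hβ
          rw [← ENNReal.ofReal_mul hc2pos.le]
          exact ENNReal.ofReal_le_ofReal (key β hβ)
      _ ≤ ∫⁻ β in Ioi (0:ℝ), ENNReal.ofReal (g β) :=
          lintegral_mono_set Ioc_subset_Ioi_self
  · -- -(m) < q → finite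
    intro hq
    set c : ℝ := Real.log (x j) - Real.log (x i) with hc
    have hcpos : 0 < c := sub_pos.mpr (Real.log_lt_log (hx i) hxlt)
    have hbound : ∀ β ∈ Ioi (0:ℝ),
        g β ≤ Real.Gamma m * (β ^ ((m:ℝ) + q - 1) * Real.exp (-c * β ^ (1:ℝ))) := by
      intro β hβ
      have hβ0 : (0:ℝ) < β := hβ
      set S : ℝ := ∑ k, x k ^ β with hSdef
      have hS0 : 0 < S := hS β
      set Q : ℝ := ∏ k ∈ U.erase i, x k ^ β with hQ
      have hQ0 : 0 < Q := Finset.prod_pos fun k _ => Real.rpow_pos_of_pos (hx k) β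
      have hPeq : (∏ k ∈ U, x k ^ β) = x i ^ β * Q :=
        (Finset.mul_prod_erase U _ hiU).symm
      have hsingle : ∀ k : Fin n, x k ^ β ≤ S := fun k =>
        Finset.single_le_sum (f := fun k => x k ^ β)
          (fun k _ => (Real.rpow_pos_of_pos (hx k) β).le) (Finset.mem_univ k)
      have hQS : Q ≤ S ^ (U.erase i).card := by
        calc Q ≤ ∏ k ∈ U.erase i, S :=
              Finset.prod_le_prod (fun k _ => (Real.rpow_pos_of_pos (hx k) β).le)
                (fun k _ => hsingle k)
          _ = S ^ (U.erase i).card := Finset.prod_const S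
      have hcard' : (U.erase i).card + 1 = m := by
        rw [Finset.card_erase_of_mem hiU, hcard]
        omega
      have hSm : x j ^ β * Q ≤ S ^ m := by
        calc x j ^ β * Q ≤ S * S ^ (U.erase i).card :=
              mul_le_mul (hsingle j) hQS hQ0.le hS0.le
          _ = S ^ ((U.erase i).card + 1) := (pow_succ' S _).symm
          _ = S ^ m := by rw [hcard']
      have hratio : (∏ k ∈ U, x k ^ β) * S ^ (-(m:ℝ)) ≤ (x i / x j) ^ β := by
        rw [Real.rpow_neg hS0.le, Real.rpow_natCast]
        rw [hPeq]
        rw [mul_inv_le_iff₀ (pow_pos hS0 m)]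
        calc x i ^ β * Q = (x i / x j) ^ β * (x j ^ β * Q) := by
              rw [Real.div_rpow (hx i).le (hx j).le]
              field_simp [(Real.rpow_pos_of_pos (hx j) β).ne']
          _ ≤ (x i / x j) ^ β * S ^ m :=
              mul_le_mul_of_nonneg_left hSm
                (Real.rpow_nonneg (div_nonneg (hx i).le (hx j).le) _)
      have hexp : (x i / x j) ^ β = Real.exp (-c * β ^ (1:ℝ)) := by
        rw [Real.rpow_def_of_pos (div_pos (hx i) (hx j)), Real.log_div (hx i).ne' (hx j).ne',
          Real.rpow_one, hc]
        ring_nf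
      rw [hg]
      refine mul_le_mul_of_nonneg_left ?_ hΓ.le
      refine le_trans (mul_le_mul_of_nonneg_left hratio (Real.rpow_nonneg hβ0.le _)) ?_
      rw [hexp]
    have hfin : (∫⁻ β in Ioi (0:ℝ),
        ENNReal.ofReal (Real.Gamma m) *
          ENNReal.ofReal (β ^ ((m:ℝ) + q - 1) * Real.exp (-c * β ^ (1:ℝ)))) ≠ ⊤ := by
      rw [lintegral_const_mul' _ _ ENNReal.ofReal_ne_top,
        aux_lintegral one_pos (by linarith) hcpos]
      exact ENNReal.mul_ne_top ENNReal.ofReal_ne_top ENNReal.ofReal_ne_top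
    refine ne_top_of_le_ne_top hfin ?_
    refine lintegral_mono_ae ?_
    filter_upwards [ae_restrict_mem measurableSet_Ioi] with β hβ
    have hβ0 : (0:ℝ) < β := hβ
    rw [← ENNReal.ofReal_mul hΓ.le]
    exact ENNReal.ofReal_le_ofReal (hbound β hβ)
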